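/- Let d ≥ 1, let K ⊆ ℝ^d be a convex, compact set contained in the nonnegative orthant that is down-closed with lower bound 0, and suppose there exists r > 0 with r·B^d_{≥0} ⊆ K. Let δ > 0 be small enough that α := (√d+1)δ/r < 1, let a' ∈ (1−α)·K, and let ∂*K denote the set of boundary points of K all of whose coordinates are strictly positive. If a lies in the closure of ∂*K and ‖a − a'‖ = inf_{x ∈ ∂*K} ‖x − a'‖, then every coordinate of a − a' is nonnegative. -/

import Mathlib

open Metric Set

/-- A set `P ⊆ ℝ^d` is down-closed with lower bound `u`: `u ∈ P`, every `y ∈ P`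
satisfies `u ≤ y` coordinatewise, and whenever `u ≤ x ≤ y` with `y ∈ P`, also `x ∈ P`. -/
def DownClosedWithLB {d : ℕ} (u : EuclideanSpace ℝ (Fin d)) (P : Set (EuclideanSpace ℝ (Fin d))) :
    Prop :=
  u ∈ P ∧ (∀ y ∈ P, ∀ i, u i ≤ y i) ∧
    ∀ x y : EuclideanSpace ℝ (Fin d), y ∈ P → (∀ i, u i ≤ x i) → (∀ i, x i ≤ y i) → x ∈ P

lemma normsq_eq {d : ℕ} (x : EuclideanSpace ℝ (Fin d)) : ‖x‖ ^ 2 = ∑ j, x j ^ 2 := by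
  rw [EuclideanSpace.norm_eq, Real.sq_sqrt (by positivity)]
  simp [Real.norm_eq_abs, sq_abs]

lemma abs_coord_le_norm {d : ℕ} (x : EuclideanSpace ℝ (Fin d)) (j : Fin d) : |x j| ≤ ‖x‖ := by
  have h := normsq_eq x
  have h2 : x j ^ 2 ≤ ‖x‖ ^ 2 := by
    rw [h]
    exact Finset.single_le_sum (f := fun j => x j ^ 2) (fun _ _ => sq_nonneg _)
      (Finset.mem_univ j)
  nlinarith [abs_nonneg (x j), norm_nonneg x, sq_abs (x j)]

def constVec {d : ℕ} (c : ℝ) : EuclideanSpace ℝ (Fin d) := WithLp.toLp 2 (fun _ => c)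

@[simp] lemma constVec_apply {d : ℕ} (c : ℝ) (j : Fin d) : constVec c j = c := rfl

lemma normsq_constVec {d : ℕ} (c : ℝ) :
    ‖(constVec c : EuclideanSpace ℝ (Fin d))‖ ^ 2 = d * c ^ 2 := by
  rw [normsq_eq]
  simp only [constVec_apply]
  rw [Finset.sum_const, Finset.card_univ, Fintype.card_fin, nsmul_eq_mul]

set_option maxHeartbeats 1000000 in
/-- Key pumping lemma: if both endpoints of a nonnegative-direction segment starting in `K`
are strictly closer to `a'` than every strictly positive frontier point, then the far
endpoint belongs to `K`. -/
lemma pump {d : ℕ} (hd : 1 ≤ d) {K : Set (EuclideanSpace ℝ (Fin d))}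
    (hconv : Convex ℝ K) (hcl : IsClosed K)
    (hpos : K ⊆ {x : EuclideanSpace ℝ (Fin d) | ∀ i, 0 ≤ x i})
    {r : ℝ} (hr : 0 < r)
    (hrK : (fun x : EuclideanSpace ℝ (Fin d) => r • x) ''
        (closedBall (0 : EuclideanSpace ℝ (Fin d)) 1 ∩ {x | ∀ i, 0 ≤ x i}) ⊆ K)
    (a' : EuclideanSpace ℝ (Fin d)) (ρ : ℝ)
    (hρ : ∀ y ∈ K, y ∈ frontier K → (∀ j, 0 < y j) → ρ ≤ ‖y - a'‖)
    (c u : EuclideanSpace ℝ (Fin d)) (hc : c ∈ K) (hu : ∀ j, 0 ≤ u j)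
    (h1 : ‖c - a'‖ < ρ) (h2 : ‖c + u - a'‖ < ρ) : c + u ∈ K := by
  have hdR : (1:ℝ) ≤ Real.sqrt d := by
    rw [show (1:ℝ) = Real.sqrt 1 from Real.sqrt_one.symm]
    exact Real.sqrt_le_sqrt (by exact_mod_cast hd)
  have hdpos : (0:ℝ) < Real.sqrt d := lt_of_lt_of_le one_pos hdR
  -- the strictly positive point p ∈ K
  have hd0 : (d:ℝ) ≠ 0 := by positivity
  have hsq : Real.sqrt d ^ 2 = (d : ℝ) := Real.sq_sqrt (by positivity)
  have hu0norm : ‖(constVec (Real.sqrt d)⁻¹ : EuclideanSpace ℝ (Fin d))‖ = 1 := by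
    have h := normsq_constVec (d := d) (Real.sqrt d)⁻¹
    rw [inv_pow, hsq] at h
    have h2' : ‖(constVec (Real.sqrt d)⁻¹ : EuclideanSpace ℝ (Fin d))‖ ^ 2 = 1 := by
      rw [h]; exact mul_inv_cancel₀ hd0
    nlinarith [norm_nonneg (constVec (Real.sqrt d)⁻¹ : EuclideanSpace ℝ (Fin d))]
  set p : EuclideanSpace ℝ (Fin d) := r • (constVec (Real.sqrt d)⁻¹) with hp
  have hpj : ∀ j, p j = r * (Real.sqrt d)⁻¹ := by
    intro j; rw [hp, PiLp.smul_apply, constVec_apply, smul_eq_mul]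
  have hpK : p ∈ K := by
    apply hrK
    refine ⟨constVec (Real.sqrt d)⁻¹, ⟨?_, fun j => by rw [constVec_apply]; positivity⟩, rfl⟩
    rw [mem_closedBall, dist_zero_right, hu0norm]
  have hppos : ∀ j, 0 < p j := by
    intro j; rw [hpj]; positivity
  set η := min (ρ - ‖c - a'‖) (ρ - ‖c + u - a'‖) with hη
  have hη0 : 0 < η := lt_min (by linarith) (by linarith)
  set X := ‖p - c‖ with hX
  have hX0 : 0 ≤ X := norm_nonneg _
  -- key approximation step
  have key : ∀ μ : ℝ, 0 < μ → μ ≤ 1/2 → μ * X < η → ((1-μ)•c + μ•p) + u ∈ K := by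
    intro μ hμ0 hμ1 hμη
    set cμ := (1-μ)•c + μ•p with hcμ
    have hcμK : cμ ∈ K := hconv hc hpK (by linarith) hμ0.le (by ring)
    have hcμj : ∀ j, cμ j = (1-μ) * c j + μ * p j := fun j => rfl
    have hcμpos : ∀ j, 0 < cμ j := by
      intro j
      have h1' := hpos hc j
      have h2' := hppos j
      rw [hcμj]; nlinarith
    have hdiff : cμ - a' = (c - a') + μ • (p - c) := by rw [hcμ]; module
    have hdist1 : ‖cμ - a'‖ < ρ := by
      calc ‖cμ - a'‖ ≤ ‖c - a'‖ + ‖μ • (p - c)‖ := by rw [hdiff]; exact norm_add_le _ _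
        _ = ‖c - a'‖ + μ * X := by rw [norm_smul, Real.norm_eq_abs, abs_of_pos hμ0, hX]
        _ < ρ := by
            have := min_le_left (ρ - ‖c - a'‖) (ρ - ‖c + u - a'‖)
            rw [← hη] at this; linarith
    have hdist2 : ‖cμ + u - a'‖ < ρ := by
      have hdiff2 : cμ + u - a' = (c + u - a') + μ • (p - c) := by rw [hcμ]; module
      calc ‖cμ + u - a'‖ ≤ ‖c + u - a'‖ + ‖μ • (p - c)‖ := by
            rw [hdiff2]; exact norm_add_le _ _
        _ = ‖c + u - a'‖ + μ * X := by rw [norm_smul, Real.norm_eq_abs, abs_of_pos hμ0, hX]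
        _ < ρ := by
            have := min_le_right (ρ - ‖c - a'‖) (ρ - ‖c + u - a'‖)
            rw [← hη] at this; linarith
    by_contra hnot
    set I := {t : ℝ | t ∈ Set.Icc (0:ℝ) 1 ∧ cμ + t • u ∈ K} with hI
    have hI0 : (0:ℝ) ∈ I := ⟨⟨le_refl _, zero_le_one⟩, by simpa using hcμK⟩
    have hIbdd : BddAbove I := ⟨1, fun t ht => ht.1.2⟩
    have hIcl : IsClosed I := by
      have heq : I = Set.Icc (0:ℝ) 1 ∩ (fun t : ℝ => cμ + t • u) ⁻¹' K := rfl
      rw [heq]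
      exact isClosed_Icc.inter (hcl.preimage
        (continuous_const.add (continuous_id.smul continuous_const)))
    set T := sSup I with hT
    have hTI : T ∈ I := hIcl.csSup_mem ⟨0, hI0⟩ hIbdd
    have hT0 : 0 ≤ T := le_csSup hIbdd hI0
    have hT1 : T < 1 := by
      rcases lt_or_eq_of_le hTI.1.2 with h | h
      · exact h
      · exact absurd (by simpa [h] using hTI.2) hnot
    set y := cμ + T • u with hy
    have hyK : y ∈ K := hTI.2
    have hyfr : y ∈ frontier K := by
      rw [frontier_eq_closure_inter_closure]
      refine ⟨subset_closure hyK, ?_⟩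
      rw [Metric.mem_closure_iff]
      intro ε hε
      set t := T + min (1 - T) (ε / (‖u‖ + 1)) with ht
      have hmin0 : 0 < min (1 - T) (ε / (‖u‖ + 1)) :=
        lt_min (by linarith) (by positivity)
      have htT : T < t := by rw [ht]; linarith
      have ht1 : t ≤ 1 := by
        have := min_le_left (1 - T) (ε / (‖u‖ + 1)); rw [ht]; linarith
      have htnI : t ∉ I := fun htI => absurd (le_csSup hIbdd htI) (not_le.mpr htT)
      have htK : cμ + t • u ∉ K := fun hk => htnI ⟨⟨by linarith, ht1⟩, hk⟩
      refine ⟨cμ + t • u, htK, ?_⟩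
      have hyd : y - (cμ + t • u) = (T - t) • u := by rw [hy]; module
      rw [dist_eq_norm, hyd, norm_smul, Real.norm_eq_abs, abs_of_neg (by linarith)]
      have hle : -(T - t) ≤ ε / (‖u‖ + 1) := by
        have := min_le_right (1 - T) (ε / (‖u‖ + 1)); rw [ht]; linarith
      have hfr : ε / (‖u‖ + 1) * ‖u‖ < ε := by
        rw [div_mul_eq_mul_div, div_lt_iff₀ (by positivity : (0:ℝ) < ‖u‖ + 1)]
        nlinarith [norm_nonneg u]
      have hmm := mul_le_mul_of_nonneg_right hle (norm_nonneg u)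
      exact lt_of_le_of_lt hmm hfr
    have hypos : ∀ j, 0 < y j := by
      intro j
      have hj : y j = cμ j + T * u j := rfl
      have h1' := hcμpos j
      have h2' := hu j
      rw [hj]; nlinarith
    have hyρ := hρ y hyK hyfr hypos
    have hydec : y - a' = (1-T) • (cμ - a') + T • (cμ + u - a') := by rw [hy]; module
    have hyle : ‖y - a'‖ ≤ (1-T) * ‖cμ - a'‖ + T * ‖cμ + u - a'‖ := by
      rw [hydec]
      calc ‖(1-T) • (cμ - a') + T • (cμ + u - a')‖
          ≤ ‖(1-T) • (cμ - a')‖ + ‖T • (cμ + u - a')‖ := norm_add_le _ _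
        _ = (1-T) * ‖cμ - a'‖ + T * ‖cμ + u - a'‖ := by
            rw [norm_smul, norm_smul, Real.norm_eq_abs, Real.norm_eq_abs,
              abs_of_nonneg (by linarith : (0:ℝ) ≤ 1 - T), abs_of_nonneg hT0]
    nlinarith [norm_nonneg (cμ - a'), norm_nonneg (cμ + u - a')]
  -- pass to the limit μ → 0
  have hclmem : c + u ∈ closure K := by
    rw [Metric.mem_closure_iff]
    intro ε hε
    set μ := min (1/2 : ℝ) (min (η / (2*(X+1))) (ε / (2*(X+1)))) with hμ
    have hμ0 : 0 < μ := by
      apply lt_min (by norm_num)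
      exact lt_min (by positivity) (by positivity)
    have hμ12 : μ ≤ 1/2 := min_le_left _ _
    have hμη : μ * X < η := by
      have h1' : μ ≤ η / (2*(X+1)) := (min_le_right _ _).trans (min_le_left _ _)
      have h2' : η / (2*(X+1)) * X < η := by
        rw [div_mul_eq_mul_div, div_lt_iff₀ (by positivity : (0:ℝ) < 2*(X+1))]
        nlinarith
      nlinarith
    refine ⟨(1-μ)•c + μ•p + u, key μ hμ0 hμ12 hμη, ?_⟩
    have hdd : (c + u) - ((1-μ)•c + μ•p + u) = μ • (c - p) := by module
    rw [dist_eq_norm, hdd, norm_smul, Real.norm_eq_abs, abs_of_pos hμ0]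
    have hcp : ‖c - p‖ = X := by rw [hX, norm_sub_rev]
    rw [hcp]
    have h1' : μ ≤ ε / (2*(X+1)) := (min_le_right _ _).trans (min_le_right _ _)
    have h2' : ε / (2*(X+1)) * X < ε := by
      rw [div_mul_eq_mul_div, div_lt_iff₀ (by positivity : (0:ℝ) < 2*(X+1))]
      nlinarith
    nlinarith
  rwa [hcl.closure_eq] at hclmem

set_option maxHeartbeats 1000000 in
theorem closest_positive_boundary_point_dominates
    (d : ℕ) (hd : 1 ≤ d) (K : Set (EuclideanSpace ℝ (Fin d)))
    (hconv : Convex ℝ K) (hcomp : IsCompact K)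
    (hpos : K ⊆ {x | ∀ i, 0 ≤ x i})
    (hdown : DownClosedWithLB (0 : EuclideanSpace ℝ (Fin d)) K)
    (r : ℝ) (hr : 0 < r)
    (hrK : (fun x : EuclideanSpace ℝ (Fin d) => r • x) ''
        (closedBall (0 : EuclideanSpace ℝ (Fin d)) 1 ∩ {x | ∀ i, 0 ≤ x i}) ⊆ K)
    (δ : ℝ) (hδ : 0 < δ)
    (α : ℝ) (hα : α = (Real.sqrt d + 1) * δ / r) (hα1 : α < 1)
    (a' : EuclideanSpace ℝ (Fin d))
    (ha' : a' ∈ (fun x : EuclideanSpace ℝ (Fin d) => (1 - α) • x) '' K)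
    (a : EuclideanSpace ℝ (Fin d))
    (ha : a ∈ closure {x : EuclideanSpace ℝ (Fin d) | x ∈ frontier K ∧ ∀ i, 0 < x i})
    (hmin : ‖a - a'‖ =
      Metric.infDist a' {x : EuclideanSpace ℝ (Fin d) | x ∈ frontier K ∧ ∀ i, 0 < x i}) :
    ∀ i, 0 ≤ a i - a' i := by
  have hcl : IsClosed K := hcomp.isClosed
  intro i
  by_contra hneg
  push_neg at hneg
  have hε : 0 < a' i - a i := by linarith
  -- a ∈ K
  have haK : a ∈ K := by
    have h1 : closure {x : EuclideanSpace ℝ (Fin d) | x ∈ frontier K ∧ ∀ i, 0 < x i}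
        ⊆ frontier K := closure_minimal (fun x hx => hx.1) isClosed_frontier
    exact hcl.frontier_subset (h1 ha)
  -- a' ∈ K
  obtain ⟨w0, hw0K, hw0⟩ := ha'
  have hα0 : 0 < α := by rw [hα]; positivity
  have ha'j : ∀ j, a' j = (1 - α) * w0 j := by
    intro j; rw [← hw0]; rfl
  have ha'K : a' ∈ K := by
    refine hdown.2.2 a' w0 hw0K (fun j => ?_) (fun j => ?_)
    · show (0 : EuclideanSpace ℝ (Fin d)) j ≤ a' j
      have hz : (0 : EuclideanSpace ℝ (Fin d)) j = 0 := rfl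
      rw [hz, ha'j j]; nlinarith [hpos hw0K j]
    · rw [ha'j j]; nlinarith [hpos hw0K j]
  have ha'pos : ∀ j, 0 ≤ a' j := hpos ha'K
  have hρS : ∀ y ∈ K, y ∈ frontier K → (∀ j, 0 < y j) → ‖a - a'‖ ≤ ‖y - a'‖ := by
    intro y hyK hyf hyp
    have h1 : Metric.infDist a' {x : EuclideanSpace ℝ (Fin d) | x ∈ frontier K ∧ ∀ i, 0 < x i}
        ≤ dist a' y := Metric.infDist_le_dist_of_mem ⟨hyf, hyp⟩
    rw [hmin]
    rwa [dist_eq_norm, norm_sub_rev] at h1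
  set ε := a' i - a i with hεdef
  have hερ : ε ≤ ‖a - a'‖ := by
    have h1 : |(a - a') i| ≤ ‖a - a'‖ := abs_coord_le_norm _ _
    have h2 : (a - a') i = a i - a' i := rfl
    rw [h2] at h1
    have := neg_le_abs (a i - a' i)
    rw [hεdef]; linarith
  have hρ0 : 0 < ‖a - a'‖ := lt_of_lt_of_le hε hερ
  -- the vector vp and w
  set vp : EuclideanSpace ℝ (Fin d) := WithLp.toLp 2 (fun j => max (a' j - a j) 0) with hvp
  have hvpj : ∀ j, vp j = max (a' j - a j) 0 := fun j => rfl
  have hvp0 : ∀ j, 0 ≤ vp j := fun j => le_max_right _ _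
  set w := a + vp - a' with hwdef
  have hwj : ∀ j, w j = max (a' j - a j) 0 - (a' j - a j) := by
    intro j
    have : w j = a j + vp j - a' j := rfl
    rw [this, hvpj]; ring
  have hwi : w i = 0 := by
    rw [hwj i, max_eq_left hε.le]; ring
  have hn1 : ‖w‖ ^ 2 + ε ^ 2 ≤ ‖a - a'‖ ^ 2 := by
    rw [normsq_eq, normsq_eq]
    have hterm : ∀ j, w j ^ 2 ≤ (a - a') j ^ 2 := by
      intro j
      rw [hwj j, show (a - a') j = a j - a' j from rfl]
      rcases le_or_gt 0 (a' j - a j) with h | h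
      · rw [max_eq_left h]; nlinarith
      · rw [max_eq_right (by linarith)]; nlinarith
    have hsplit : w i ^ 2 + ∑ j ∈ Finset.univ.erase i, w j ^ 2 = ∑ j, w j ^ 2 :=
      Finset.add_sum_erase Finset.univ (fun j => w j ^ 2) (Finset.mem_univ i)
    have hsplit2 : (a - a') i ^ 2 + ∑ j ∈ Finset.univ.erase i, (a - a') j ^ 2
        = ∑ j, (a - a') j ^ 2 :=
      Finset.add_sum_erase Finset.univ (fun j => (a - a') j ^ 2) (Finset.mem_univ i)
    have hbound : ∑ j ∈ Finset.univ.erase i, w j ^ 2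
        ≤ ∑ j ∈ Finset.univ.erase i, (a - a') j ^ 2 :=
      Finset.sum_le_sum fun j _ => hterm j
    have hεsq : ε ^ 2 = (a - a') i ^ 2 := by
      rw [show (a - a') i = a i - a' i from rfl, hεdef]; ring
    rw [hwi] at hsplit
    rw [hεsq]
    linarith
  set s0 := Real.sqrt (‖a - a'‖ ^ 2 - ε ^ 2) with hs0
  have hs0sq : s0 ^ 2 = ‖a - a'‖ ^ 2 - ε ^ 2 := Real.sq_sqrt (by nlinarith)
  have hs0nn : 0 ≤ s0 := Real.sqrt_nonneg _
  have hs0lt : s0 < ‖a - a'‖ := by nlinarith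
  have hwle : ‖w‖ ≤ s0 := by nlinarith [norm_nonneg w]
  have hdR : (1:ℝ) ≤ Real.sqrt d := by
    rw [show (1:ℝ) = Real.sqrt 1 from Real.sqrt_one.symm]
    exact Real.sqrt_le_sqrt (by exact_mod_cast hd)
  have hdpos : (0:ℝ) < Real.sqrt d := lt_of_lt_of_le one_pos hdR
  set τ := (‖a - a'‖ - s0) / (2 * Real.sqrt d) with hτ
  have hτ0 : 0 < τ := div_pos (by linarith) (by linarith)
  -- R bound
  obtain ⟨R, hR⟩ := hcomp.isBounded.subset_closedBall 0
  set R' := max R 0 with hR'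
  have hR'0 : (0:ℝ) ≤ R' := le_max_right _ _
  have haR : ∀ j, a j ≤ R' := by
    intro j
    have h1 := abs_coord_le_norm a j
    have h2 : ‖a‖ ≤ R := by
      have := hR haK
      rwa [mem_closedBall, dist_zero_right] at this
    calc a j ≤ |a j| := le_abs_self _
      _ ≤ ‖a‖ := h1
      _ ≤ R := h2
      _ ≤ R' := le_max_left _ _
  set lam := min (1/2 : ℝ) (τ / (2*R' + 2)) with hlam
  have hlam0 : 0 < lam := lt_min (by norm_num) (div_pos hτ0 (by linarith))
  have hlam1 : lam ≤ 1/2 := min_le_left _ _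
  have hlamR : lam * R' ≤ τ / 2 := by
    have h1 : lam ≤ τ / (2*R' + 2) := min_le_right _ _
    have h2 : lam * R' ≤ τ / (2*R' + 2) * R' := mul_le_mul_of_nonneg_right h1 hR'0
    have h3 : τ / (2*R' + 2) * R' ≤ τ / 2 := by
      rw [div_mul_eq_mul_div, div_le_div_iff₀ (by linarith) (by norm_num)]
      nlinarith
    linarith
  -- all-ones vector
  have honenorm : ‖(constVec 1 : EuclideanSpace ℝ (Fin d))‖ = Real.sqrt d := by
    have h := normsq_constVec (d := d) 1
    rw [one_pow, mul_one] at h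
    rw [← h, Real.sqrt_sq (norm_nonneg _)]
  -- first pump
  set c1 := (1 - lam) • a + lam • a' with hc1
  have hc1K : c1 ∈ K := hconv haK ha'K (by linarith) hlam0.le (by ring)
  have h11 : ‖c1 - a'‖ < ‖a - a'‖ := by
    have he : c1 - a' = (1 - lam) • (a - a') := by rw [hc1]; module
    rw [he, norm_smul, Real.norm_eq_abs, abs_of_nonneg (by linarith : (0:ℝ) ≤ 1 - lam)]
    nlinarith
  set u1 := (1 - lam) • vp with hu1
  have hu1pos : ∀ j, 0 ≤ u1 j := by
    intro j
    have h1' : u1 j = (1 - lam) * vp j := rfl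
    rw [h1']
    have := hvp0 j
    nlinarith
  have hcw : c1 + u1 - a' = (1 - lam) • w := by rw [hc1, hu1, hwdef]; module
  have h12 : ‖c1 + u1 - a'‖ < ‖a - a'‖ := by
    rw [hcw, norm_smul, Real.norm_eq_abs, abs_of_nonneg (by linarith : (0:ℝ) ≤ 1 - lam)]
    nlinarith [norm_nonneg w]
  have hc2K : c1 + u1 ∈ K :=
    pump hd hconv hcl hpos hr hrK a' ‖a - a'‖ hρS c1 u1 hc1K hu1pos h11 h12
  -- second pump
  have h21 : ‖c1 + u1 - a'‖ ≤ s0 := by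
    rw [hcw, norm_smul, Real.norm_eq_abs, abs_of_nonneg (by linarith : (0:ℝ) ≤ 1 - lam)]
    nlinarith [norm_nonneg w]
  set u2 := τ • (constVec 1 : EuclideanSpace ℝ (Fin d)) with hu2
  have hu2j : ∀ j, u2 j = τ := by
    intro j
    rw [hu2, PiLp.smul_apply, constVec_apply, smul_eq_mul, mul_one]
  have hu2pos : ∀ j, 0 ≤ u2 j := fun j => by rw [hu2j]; linarith
  have hτd : τ * Real.sqrt d = (‖a - a'‖ - s0) / 2 := by
    rw [hτ]; field_simp
  have h22 : ‖(c1 + u1) + u2 - a'‖ < ‖a - a'‖ := by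
    have hsplit : (c1 + u1) + u2 - a' = ((c1 + u1) - a') + u2 := by module
    have h1' : ‖(c1 + u1) + u2 - a'‖ ≤ ‖c1 + u1 - a'‖ + ‖u2‖ := by
      rw [hsplit]; exact norm_add_le _ _
    have h2' : ‖u2‖ = τ * Real.sqrt d := by
      rw [hu2, norm_smul, Real.norm_eq_abs, abs_of_pos hτ0, honenorm]
    rw [h2', hτd] at h1'
    linarith
  have hxK : (c1 + u1) + u2 ∈ K :=
    pump hd hconv hcl hpos hr hrK a' ‖a - a'‖ hρS (c1 + u1) u2 hc2K hu2pos
      (lt_of_le_of_lt h21 hs0lt) h22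
  set xs := (c1 + u1) + u2 with hxs
  have hxcoord : ∀ j, a j + τ/2 ≤ xs j := by
    intro j
    have h1' : xs j = ((1 - lam) * a j + lam * a' j) + (1 - lam) * vp j + u2 j := by
      rw [hxs, hc1, hu1]
      simp only [PiLp.add_apply, PiLp.smul_apply, smul_eq_mul]
    rw [h1', hu2j]
    have h2' := ha'pos j
    have h3' := hvp0 j
    have h4' := haR j
    have h5' := hpos haK j
    have h6' := mul_le_mul_of_nonneg_left h4' hlam0.le
    have h7' := mul_nonneg hlam0.le h2'
    have h8' := mul_nonneg (by linarith : (0:ℝ) ≤ 1 - lam) h3'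
    linarith
  -- extract a nearby strictly positive frontier point and contradict
  obtain ⟨s, hsS, hsd⟩ := Metric.mem_closure_iff.mp ha (τ/2) (by positivity)
  have hscoord : ∀ j, s j < xs j := by
    intro j
    have h1' := abs_coord_le_norm (s - a) j
    have h2' : (s - a) j = s j - a j := rfl
    rw [h2'] at h1'
    have h3' : ‖s - a‖ = dist a s := by rw [dist_eq_norm, norm_sub_rev]
    have h4' := le_abs_self (s j - a j)
    have h5' := hxcoord j
    rw [h3'] at h1'
    linarith
  have hsint : s ∈ interior K := by
    rw [mem_interior]
    refine ⟨{y : EuclideanSpace ℝ (Fin d) | ∀ j, 0 < y j ∧ y j < xs j},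
      fun y hy => hdown.2.2 y xs hxK (fun j => (hy j).1.le) (fun j => (hy j).2.le),
      ?_, fun j => ⟨hsS.2 j, hscoord j⟩⟩
    have heq : {y : EuclideanSpace ℝ (Fin d) | ∀ j, 0 < y j ∧ y j < xs j}
        = ⋂ j, (fun y : EuclideanSpace ℝ (Fin d) => y j) ⁻¹' Set.Ioo 0 (xs j) := by
      ext y
      simp only [Set.mem_setOf_eq, Set.mem_iInter, Set.mem_preimage, Set.mem_Ioo]
    rw [heq]
    exact isOpen_iInter_of_finite fun j =>
      (isOpen_Ioo).preimage (EuclideanSpace.proj j).continuous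
  have hsnint : s ∉ interior K := by
    have h := hsS.1
    rw [frontier_eq_closure_inter_closure] at h
    have h2' := h.2
    rwa [closure_compl, Set.mem_compl_iff] at h2'
  exact hsnint hsint
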